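/- Let Δ be a 2-local derivation on 𝓑 with Δ(L_{0,0}) = Δ(L_{1,0}) = 0. Then for every x = Σ μ_{γ,k} L_{γ,k} ∈ 𝓑 there exists ξ_x ∈ ℂ such that Δ(x) = ξ_x · Σ k μ_{γ,k} L_{γ,k}. -/
import Mathlib


noncomputable section

abbrev B := (ℤ × ℕ) →₀ ℂ

/-- basis element `L α i` -/
def L (α : ℤ) (i : ℕ) : B := Finsupp.single (α, i) 1

/-- structure constant `(α-1)(j+1) - (β-1)(i+1)` -/
def coef (p q : ℤ × ℕ) : ℂ :=
  ((p.1 - 1) * ((q.2 : ℤ) + 1) - (q.1 - 1) * ((p.2 : ℤ) + 1) : ℤ)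

/-- the Block-type bracket, as a bilinear map -/
def br : B →ₗ[ℂ] B →ₗ[ℂ] B :=
  Finsupp.lsum ℂ fun p => LinearMap.toSpanSingleton ℂ _
    (Finsupp.lsum ℂ fun q => LinearMap.toSpanSingleton ℂ _
      (coef p q • L (p.1 + q.1) (p.2 + q.2)))

/-- the outer derivation `d`, with `d (L β j) = β • L β j` -/
def dmap : B →ₗ[ℂ] B :=
  Finsupp.lsum ℂ fun p => LinearMap.toSpanSingleton ℂ _ ((p.1 : ℂ) • L p.1 p.2)

def IsDer (D : B →ₗ[ℂ] B) : Prop := ∀ x y, D (br x y) = br (D x) y + br x (D y)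

def Is2Local (Δ : B → B) : Prop :=
  ∀ x y, ∃ D : B →ₗ[ℂ] B, IsDer D ∧ Δ x = D x ∧ Δ y = D y

lemma Lval (γ : ℤ) (k : ℕ) (u : ℤ × ℕ) :
    L γ k u = if ((γ, k) : ℤ × ℕ) = u then 1 else 0 := by
  rw [L, Finsupp.single_apply]

lemma sum_eq_single_point (f : B) (g : (ℤ × ℕ) → ℂ → ℂ) (q0 : ℤ × ℕ)
    (h0 : g q0 0 = 0) (h : ∀ q, q ≠ q0 → g q (f q) = 0) :
    f.sum g = g q0 (f q0) := by
  classical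
  rw [Finsupp.sum]
  by_cases hq : q0 ∈ f.support
  · exact Finset.sum_eq_single_of_mem q0 hq (fun b _ hb => h b hb)
  · rw [Finsupp.notMem_support_iff.mp hq, h0, Finset.sum_eq_zero]
    intro q hqs
    by_cases e : q = q0
    · exact absurd (e ▸ hqs) hq
    · exact h q e

lemma br_apply (a x : B) (u : ℤ × ℕ) :
    br a x u = a.sum fun q cq => x.sum fun r cr =>
      cq * (cr * (coef q r * (L (q.1 + r.1) (q.2 + r.2) u))) := by
  simp only [br, Finsupp.lsum_apply, Finsupp.sum, LinearMap.sum_apply,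
    LinearMap.toSpanSingleton_apply, LinearMap.smul_apply, Finsupp.smul_apply,
    Finsupp.finset_sum_apply, smul_eq_mul, Finset.mul_sum]

lemma dmap_apply (x : B) (u : ℤ × ℕ) : dmap x u = (u.1 : ℂ) * x u := by
  simp only [dmap, Finsupp.lsum_apply, LinearMap.toSpanSingleton_apply,
    Finsupp.sum_apply, Finsupp.smul_apply, smul_eq_mul]
  rw [sum_eq_single_point _ _ u (by simp) ?_]
  · rw [Lval, if_pos rfl]; ring
  · intro q hq
    have hL : L q.1 q.2 u = 0 := by
      rw [Lval]; exact if_neg (by simpa using hq)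
    rw [hL, mul_zero, mul_zero]

lemma single_sum_eval (g : (ℤ × ℕ) → ℂ → ℂ) (β : ℤ) (j : ℕ) (h : g (β, j) 0 = 0) :
    (L β j).sum g = g (β, j) 1 := by
  rw [L]; exact Finsupp.sum_single_index h

lemma br_L_apply (a : B) (β : ℤ) (j : ℕ) (u : ℤ × ℕ) :
    br a (L β j) u = a.sum fun q cq => cq * (coef q (β, j) * L (q.1 + β) (q.2 + j) u) := by
  rw [br_apply]
  apply Finsupp.sum_congr
  intro q _
  rw [single_sum_eval _ _ _ (by simp), one_mul]

lemma br_L0_apply (a : B) (β : ℤ) (u : ℤ × ℕ) :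
    br a (L β 0) u = a (u.1 - β, u.2) * coef (u.1 - β, u.2) (β, 0) := by
  rw [br_L_apply]
  rw [sum_eq_single_point _ _ (u.1 - β, u.2) (by simp) ?_]
  · have hL : L (u.1 - β + β) (u.2 + 0) u = 1 := by
      rw [Lval, if_pos (by rw [Prod.ext_iff]; constructor <;> simp)]
    rw [hL]; ring
  · intro q hq
    have hL : L (q.1 + β) (q.2 + 0) u = 0 := by
      rw [Lval]
      refine if_neg fun he => hq ?_
      rw [Prod.ext_iff] at he ⊢
      obtain ⟨h1, h2⟩ := he
      constructor
      · simp only [] at h1 ⊢; omega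
      · simpa using h2
    rw [hL, mul_zero, mul_zero]

lemma constraint (a : B) (lam : ℂ) (β : ℤ)
    (h : br a (L β 0) + lam • dmap (L β 0) = 0) :
    ∀ q : ℤ × ℕ, a q * coef q (β, 0) +
      (if q = ((0, 0) : ℤ × ℕ) then lam * (β : ℂ) else 0) = 0 := by
  intro q
  have hu := congrArg (fun f : B => f (q.1 + β, q.2)) h
  simp only [Finsupp.add_apply, Finsupp.smul_apply, smul_eq_mul, Finsupp.zero_apply] at hu
  rw [br_L0_apply, dmap_apply] at hu
  simp only [add_sub_cancel_right] at hu
  -- hu : a (q.1, q.2) * coef (q.1,q.2) (β,0) + lam * ((q.1+β : ℤ) * L β 0 (q.1+β, q.2)) = 0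
  have hqq : ((q.1, q.2) : ℤ × ℕ) = q := rfl
  rw [hqq] at hu
  by_cases h00 : q = ((0, 0) : ℤ × ℕ)
  · subst h00
    rw [if_pos rfl]
    have hL : L β 0 ((0:ℤ) + β, (0:ℕ)) = 1 := by
      rw [Lval, if_pos (by simp)]
    rw [hL] at hu
    push_cast at hu ⊢
    linear_combination hu
  · rw [if_neg h00]
    have hL : L β 0 (q.1 + β, q.2) = 0 := by
      rw [Lval]
      refine if_neg fun he => h00 ?_
      rw [Prod.ext_iff] at he
      obtain ⟨h1, h2⟩ := he
      rw [Prod.ext_iff]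
      simp only [] at h1 h2 ⊢
      omega
    rw [hL] at hu
    simpa using hu


lemma deltaL0 (Δ : B → B) (hΔ : Is2Local Δ)
    (hDer : ∀ D : B →ₗ[ℂ] B, IsDer D →
      ∃ (a : B) (lam : ℂ), ∀ x : B, D x = br a x + lam • dmap x)
    (h0 : Δ (L 0 0) = 0) (h1 : Δ (L 1 0) = 0) (β : ℤ) :
    Δ (L β 0) = 0 := by
  obtain ⟨D1, hd1, hx1, hy1⟩ := hΔ (L β 0) (L 0 0)
  obtain ⟨a1, l1, hD1⟩ := hDer D1 hd1
  obtain ⟨D2, hd2, hx2, hy2⟩ := hΔ (L β 0) (L 1 0)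
  obtain ⟨a2, l2, hD2⟩ := hDer D2 hd2
  have c1 := constraint a1 l1 0 (by rw [← hD1, ← hy1]; exact h0)
  have c2 := constraint a2 l2 1 (by rw [← hD2, ← hy2]; exact h1)
  ext u
  rw [Finsupp.zero_apply]
  by_cases hu : u.1 = β + 1
  · -- use rep 1
    have rep1 : Δ (L β 0) u
        = a1 (u.1 - β, u.2) * coef (u.1 - β, u.2) (β, 0) + l1 * ((u.1 : ℂ) * L β 0 u) := by
      rw [hx1, hD1, Finsupp.add_apply, Finsupp.smul_apply, smul_eq_mul, dmap_apply,
        br_L0_apply]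
    have hq1 : ((u.1 - β, u.2) : ℤ × ℕ) = ((1 : ℤ), u.2) := by
      rw [Prod.ext_iff]; constructor
      · simp only []; omega
      · rfl
    have ha1 : a1 ((1 : ℤ), u.2) = 0 := by
      have := c1 ((1 : ℤ), u.2)
      rw [if_neg (by simp [Prod.ext_iff])] at this
      have hc : coef ((1 : ℤ), u.2) ((0 : ℤ), (0 : ℕ)) = ((u.2 : ℂ) + 1) := by
        rw [coef]; push_cast; ring
      rw [hc, add_zero] at this
      have hne : ((u.2 : ℂ) + 1) ≠ 0 := Nat.cast_add_one_ne_zero u.2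
      exact (mul_eq_zero.mp this).resolve_right hne
    have hL : L β 0 u = 0 := by
      rw [Lval]
      refine if_neg fun he => ?_
      rw [Prod.ext_iff] at he
      omega
    rw [rep1, hq1, ha1, hL]; ring
  · -- use rep 2
    have rep2 : Δ (L β 0) u
        = a2 (u.1 - β, u.2) * coef (u.1 - β, u.2) (β, 0) + l2 * ((u.1 : ℂ) * L β 0 u) := by
      rw [hx2, hD2, Finsupp.add_apply, Finsupp.smul_apply, smul_eq_mul, dmap_apply,
        br_L0_apply]
    by_cases h00 : ((u.1 - β, u.2) : ℤ × ℕ) = ((0 : ℤ), (0 : ℕ))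
    · -- u = (β, 0)
      have hu2 : u = ((β, 0) : ℤ × ℕ) := by
        rw [Prod.ext_iff] at h00 ⊢
        simp only [] at h00 ⊢
        omega
      have hc2 := c2 ((0 : ℤ), (0 : ℕ))
      rw [if_pos rfl] at hc2
      have hcv : coef ((0 : ℤ), (0 : ℕ)) ((1 : ℤ), (0 : ℕ)) = -1 := by
        rw [coef]; push_cast; ring
      rw [hcv] at hc2
      -- hc2 : a2 (0,0) * (-1) + l2 * 1 = 0
      have hL : L β 0 u = 1 := by rw [Lval, if_pos hu2.symm]
      have hcb : coef ((0 : ℤ), (0 : ℕ)) (β, 0) = -(β : ℂ) := by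
        rw [coef]; push_cast; ring
      rw [rep2, h00, hcb, hL, hu2]
      simp only []
      push_cast
      linear_combination (β:ℂ) * hc2
    · have hc2 := c2 (u.1 - β, u.2)
      rw [if_neg h00, add_zero] at hc2
      have hcv : coef ((u.1 - β : ℤ), u.2) ((1 : ℤ), (0 : ℕ)) = ((u.1 : ℂ) - β - 1) := by
        rw [coef]; push_cast; ring
      rw [hcv] at hc2
      have hne : ((u.1 : ℂ) - β - 1) ≠ 0 := by
        intro h
        apply hu
        have : ((u.1 : ℂ)) = ((β + 1 : ℤ) : ℂ) := by push_cast; linear_combination h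
        exact_mod_cast this
      have ha2 : a2 (u.1 - β, u.2) = 0 := (mul_eq_zero.mp hc2).resolve_right hne
      have hL : L β 0 u = 0 := by
        rw [Lval]
        refine if_neg fun he => h00 ?_
        rw [Prod.ext_iff] at he ⊢
        simp only [] at he ⊢
        omega
      rw [rep2, ha2, hL]; ring

theorem two_local_general_form (Δ : B → B) (hΔ : Is2Local Δ)
    (hDer : ∀ D : B →ₗ[ℂ] B, IsDer D →
      ∃ (a : B) (lam : ℂ), ∀ x : B, D x = br a x + lam • dmap x)
    (h0 : Δ (L 0 0) = 0) (h1 : Δ (L 1 0) = 0) :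
    ∀ x : B, ∃ ξ : ℂ, ∀ p : ℤ × ℕ, (Δ x) p = ξ * (p.2 : ℂ) * x p := by
  intro x
  classical
  set s : Finset (ℤ × ℕ) := x.support ∪ (Δ x).support with hs
  set N : ℕ := s.sup fun p => p.1.natAbs with hN
  have hbound : ∀ p ∈ s, p.1 ≤ (N : ℤ) ∧ -(N : ℤ) ≤ p.1 := by
    intro p hp
    have h := Finset.le_sup (f := fun p : ℤ × ℕ => p.1.natAbs) hp
    have h2 : (p.1.natAbs : ℤ) ≤ (N : ℤ) := by exact_mod_cast h
    omega
  set β₀ : ℤ := 2 * N + 2 with hβ₀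
  obtain ⟨D, hdis, hDx, hDy⟩ := hΔ x (L β₀ 0)
  obtain ⟨a, lam, hD⟩ := hDer D hdis
  have hzero : br a (L β₀ 0) + lam • dmap (L β₀ 0) = 0 := by
    rw [← hD, ← hDy]
    exact deltaL0 Δ hΔ hDer h0 h1 β₀
  have c := constraint a lam β₀ hzero
  have hβne : ((β₀ : ℂ)) ≠ 0 := by
    rw [Int.cast_ne_zero]; omega
  have hlam : lam = a ((0 : ℤ), (0 : ℕ)) := by
    have hc := c ((0 : ℤ), (0 : ℕ))
    rw [if_pos rfl] at hc
    have hcb : coef ((0 : ℤ), (0 : ℕ)) (β₀, 0) = -(β₀ : ℂ) := by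
      rw [coef]; push_cast; ring
    rw [hcb] at hc
    have hz : (lam - a ((0 : ℤ), (0 : ℕ))) * (β₀ : ℂ) = 0 := by linear_combination hc
    have := (mul_eq_zero.mp hz).resolve_right hβne
    exact sub_eq_zero.mp this
  have hsupp : ∀ q : ℤ × ℕ, q ≠ ((0, 0) : ℤ × ℕ) → a q ≠ 0 → β₀ ≤ q.1 := by
    intro q hq ha
    have hc := c q
    rw [if_neg hq, add_zero] at hc
    have hcoef : coef q (β₀, 0) = 0 := (mul_eq_zero.mp hc).resolve_left ha
    have hint : ((q.1 - 1) * (((0 : ℕ) : ℤ) + 1) - (β₀ - 1) * ((q.2 : ℤ) + 1) : ℤ) = 0 := by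
      rw [coef] at hcoef
      exact_mod_cast hcoef
    have hq2 : (0 : ℤ) ≤ (q.2 : ℤ) := Int.natCast_nonneg _
    have hN0 : (0 : ℤ) ≤ (N : ℤ) := Int.natCast_nonneg _
    simp only [Nat.cast_zero, zero_add, mul_one] at hint
    nlinarith [hint, hq2, hN0]
  refine ⟨-(a ((0 : ℤ), (0 : ℕ))), ?_⟩
  intro p
  have hΔxp : (Δ x) p = br a x p + a ((0 : ℤ), (0 : ℕ)) * ((p.1 : ℂ) * x p) := by
    rw [hDx, hD, Finsupp.add_apply, Finsupp.smul_apply, smul_eq_mul, dmap_apply, hlam]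
  by_cases hp : p.1 ≤ (N : ℤ)
  · -- low region
    have houter : ∀ q : ℤ × ℕ, q ≠ ((0, 0) : ℤ × ℕ) →
        (x.sum fun r cr => a q * (cr * (coef q r * L (q.1 + r.1) (q.2 + r.2) p))) = 0 := by
      intro q hq
      rw [Finsupp.sum]
      apply Finset.sum_eq_zero
      intro r hr
      by_cases ha : a q = 0
      · rw [ha]; ring
      by_cases hL : (((q.1 + r.1, q.2 + r.2)) : ℤ × ℕ) = p
      · exfalso
        have h1 : β₀ ≤ q.1 := hsupp q hq ha
        have h2 : -(N : ℤ) ≤ r.1 :=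
          (hbound r (Finset.mem_union_left _ hr)).2
        have h3 : q.1 + r.1 = p.1 := by
          rw [Prod.ext_iff] at hL
          exact hL.1
        omega
      · have hLz : L (q.1 + r.1) (q.2 + r.2) p = 0 := by
          rw [Lval]; exact if_neg hL
        rw [hLz]; ring
    have hinner : (x.sum fun r cr =>
        a ((0 : ℤ), (0 : ℕ)) * (cr * (coef ((0 : ℤ), (0 : ℕ)) r *
          L ((0 : ℤ) + r.1) ((0 : ℕ) + r.2) p))) =
        a ((0 : ℤ), (0 : ℕ)) * (x p * (coef ((0 : ℤ), (0 : ℕ)) p * 1)) := by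
      rw [sum_eq_single_point _ _ p (by ring) ?_]
      · have hL1 : L ((0 : ℤ) + p.1) ((0 : ℕ) + p.2) p = 1 := by
          rw [Lval, if_pos]
          rw [Prod.ext_iff]
          exact ⟨zero_add _, Nat.zero_add _⟩
        rw [hL1]
      · intro r hr
        have hLz : L ((0 : ℤ) + r.1) ((0 : ℕ) + r.2) p = 0 := by
          rw [Lval]
          refine if_neg fun he => hr ?_
          rw [Prod.ext_iff] at he ⊢
          constructor
          · have := he.1; omega
          · have := he.2; omega
        rw [hLz]; ring
    have hbr : br a x p = a ((0 : ℤ), (0 : ℕ)) * (x p * (coef ((0 : ℤ), (0 : ℕ)) p * 1)) := by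
      rw [br_apply]
      rw [sum_eq_single_point _ _ ((0 : ℤ), (0 : ℕ)) ?_ ?_]
      · exact hinner
      · simp
      · exact houter
    have hc0 : coef ((0 : ℤ), (0 : ℕ)) p = -(p.2 : ℂ) - (p.1 : ℂ) := by
      rw [coef]; push_cast; ring
    rw [hΔxp, hbr, hc0]
    ring
  · -- high region
    have hxp : x p = 0 := by
      by_contra h
      exact hp (hbound p (Finset.mem_union_left _ (Finsupp.mem_support_iff.mpr h))).1
    have hdxp : (Δ x) p = 0 := by
      by_contra h
      exact hp (hbound p (Finset.mem_union_right _ (Finsupp.mem_support_iff.mpr h))).1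
    rw [hdxp, hxp]; ring

end
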